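/- Let G be a simple connected graph. For every pair of distinct vertices x, y and every α ∈ [0,1], the α-Ricci curvature satisfies κ_α(x,y) ≤ (1−α)·2/d(x,y). -/

import Mathlib

open Filter Set

variable {V : Type*}

-- The `α`-lazy random walk distribution at vertex `x`.
open Classical in
noncomputable def lazyWalk (G : SimpleGraph V) [G.LocallyFinite] (α : ℝ) (x : V) : V → ℝ :=
  fun v => if v = x then α else if G.Adj x v then (1 - α) / (G.degree x : ℝ) else 0

/-- `A` is a coupling between the finitely supported distributions `m₁` and `m₂`. -/
def IsCoupling (m₁ m₂ : V → ℝ) (A : V → V → ℝ) : Prop :=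
  (Function.support fun p : V × V => A p.1 p.2).Finite ∧
  (∀ x y, 0 ≤ A x y ∧ A x y ≤ 1) ∧
  (∀ x, ∑ᶠ y, A x y = m₁ x) ∧
  (∀ y, ∑ᶠ x, A x y = m₂ y)

/-- The transportation (Wasserstein) distance between two distributions on `V`,
with respect to the graph distance of `G`. -/
noncomputable def transportDist (G : SimpleGraph V) (m₁ m₂ : V → ℝ) : ℝ :=
  sInf {w : ℝ | ∃ A : V → V → ℝ, IsCoupling m₁ m₂ A ∧
    w = ∑ᶠ p : V × V, A p.1 p.2 * (G.dist p.1 p.2 : ℝ)}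

/-- The `α`-Ricci curvature `κ_α(x,y)`. -/
noncomputable def alphaRicci (G : SimpleGraph V) [G.LocallyFinite] (α : ℝ) (x y : V) : ℝ :=
  1 - transportDist G (lazyWalk G α x) (lazyWalk G α y) / (G.dist x y : ℝ)

/-- `κ` is the Lin–Lu–Yau Ricci curvature of the pair `(x,y)`:
the limit of `κ_α(x,y)/(1-α)` as `α → 1⁻`. -/
def HasLLYCurv (G : SimpleGraph V) [G.LocallyFinite] (x y : V) (κ : ℝ) : Prop :=
  Tendsto (fun α : ℝ => alphaRicci G α x y / (1 - α)) (nhdsWithin 1 (Set.Iio 1)) (nhds κ)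

/-- `G` is positively curved: every edge has positive Lin–Lu–Yau Ricci curvature. -/
def PositivelyCurved (G : SimpleGraph V) [G.LocallyFinite] : Prop :=
  ∀ ⦃x y : V⦄, G.Adj x y → ∃ κ : ℝ, 0 < κ ∧ HasLLYCurv G x y κ

/-- `G` is planar: it admits a topological embedding in the plane, i.e. an injective
placement of the vertices together with arcs for the edges, where arcs are injective
continuous curves joining the endpoints, not passing through any other vertex, and
two arcs of distinct edges meet only in common endpoints. -/
def IsPlanar (G : SimpleGraph V) : Prop :=
  ∃ (f : V → ℝ × ℝ) (e : ∀ u v : V, G.Adj u v → Set.Icc (0:ℝ) 1 → ℝ × ℝ),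
    Function.Injective f ∧
    (∀ u v (h : G.Adj u v), Continuous (e u v h)) ∧
    (∀ u v (h : G.Adj u v), Function.Injective (e u v h)) ∧
    (∀ u v (h : G.Adj u v),
      e u v h ⟨0, Set.left_mem_Icc.mpr zero_le_one⟩ = f u ∧
      e u v h ⟨1, Set.right_mem_Icc.mpr zero_le_one⟩ = f v) ∧
    (∀ u v (h : G.Adj u v) (w : V), w ≠ u → w ≠ v → f w ∉ Set.range (e u v h)) ∧
    (∀ u v (h : G.Adj u v) (u' v' : V) (h' : G.Adj u' v'), ({u, v} : Set V) ≠ {u', v'} →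
      Set.range (e u v h) ∩ Set.range (e u' v' h') ⊆ (f '' {u, v}) ∩ (f '' {u', v'}))


section Aux

variable (G : SimpleGraph V) [G.LocallyFinite]
variable [DecidableEq V] [DecidableRel G.Adj]

lemma lazyWalk_nonneg {α : ℝ} (hα : α ∈ Set.Icc (0:ℝ) 1) (x v : V) :
    0 ≤ lazyWalk G α x v := by
  unfold lazyWalk
  split_ifs with h1 h2
  · exact hα.1
  · exact div_nonneg (by linarith [hα.2]) (Nat.cast_nonneg _)
  · exact le_rfl

lemma lazyWalk_le_one {α : ℝ} (hα : α ∈ Set.Icc (0:ℝ) 1) (x v : V) :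
    lazyWalk G α x v ≤ 1 := by
  unfold lazyWalk
  split_ifs with h1 h2
  · exact hα.2
  · have hd : 0 < G.degree x := (G.degree_pos_iff_exists_adj _).2 ⟨v, h2⟩
    rw [div_le_one (by exact_mod_cast hd)]
    have : (1:ℝ) ≤ (G.degree x : ℝ) := by exact_mod_cast hd
    linarith [hα.1]
  · exact zero_le_one

lemma lazyWalk_support (α : ℝ) (x : V) :
    Function.support (lazyWalk G α x) ⊆ ↑(insert x (G.neighborFinset x)) := by
  intro v hv
  rw [Function.mem_support] at hv
  unfold lazyWalk at hv
  by_cases h1 : v = x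
  · simp [h1]
  by_cases h2 : G.Adj x v
  · simp [SimpleGraph.mem_neighborFinset, h2]
  · simp [h1, h2] at hv

lemma lazyWalk_finsum {α : ℝ} (x : V) (hd : 0 < G.degree x) :
    ∑ᶠ v, lazyWalk G α x v = 1 := by
  rw [finsum_eq_sum_of_support_subset _ (lazyWalk_support G α x)]
  rw [Finset.sum_insert (by simp)]
  have h1 : lazyWalk G α x x = α := by simp [lazyWalk]
  have h2 : ∀ v ∈ G.neighborFinset x, lazyWalk G α x v = (1-α)/(G.degree x : ℝ) := by
    intro v hv
    rw [SimpleGraph.mem_neighborFinset] at hv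
    simp [lazyWalk, hv.ne', hv]
  rw [h1, Finset.sum_congr rfl h2, Finset.sum_const, nsmul_eq_mul]
  have hcard : ((G.neighborFinset x).card : ℝ) = (G.degree x : ℝ) := by
    norm_cast
  rw [hcard, mul_comm, div_mul_cancel₀ _ (by exact_mod_cast hd.ne' : (G.degree x:ℝ) ≠ 0)]
  ring

lemma sum_offdiag_le {α : ℝ} (hα : α ∈ Set.Icc (0:ℝ) 1) (x : V) (U : Finset V) :
    ∑ u ∈ U, (if u = x then 0 else lazyWalk G α x u) ≤ 1 - α := by
  have hg0 : ∀ u, 0 ≤ (if u = x then (0:ℝ) else lazyWalk G α x u) := by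
    intro u
    by_cases h : u = x
    · simp [h]
    · simpa [h] using lazyWalk_nonneg G hα x u
  have step1 : ∑ u ∈ U, (if u = x then (0:ℝ) else lazyWalk G α x u)
      = ∑ u ∈ U ∩ G.neighborFinset x, (if u = x then (0:ℝ) else lazyWalk G α x u) := by
    refine (Finset.sum_subset Finset.inter_subset_left ?_).symm
    intro u hu hu2
    have hn : u ∉ G.neighborFinset x := fun h => hu2 (Finset.mem_inter.2 ⟨hu, h⟩)
    rw [SimpleGraph.mem_neighborFinset] at hn
    by_cases h : u = x
    · simp [h]
    · simp [h, lazyWalk, hn]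
  have step2 : ∑ u ∈ U ∩ G.neighborFinset x, (if u = x then (0:ℝ) else lazyWalk G α x u)
      ≤ ∑ u ∈ G.neighborFinset x, (if u = x then (0:ℝ) else lazyWalk G α x u) :=
    Finset.sum_le_sum_of_subset_of_nonneg Finset.inter_subset_right (fun u _ _ => hg0 u)
  have step3 : ∑ u ∈ G.neighborFinset x, (if u = x then (0:ℝ) else lazyWalk G α x u)
      = (G.degree x : ℝ) * ((1-α)/(G.degree x : ℝ)) := by
    have h2 : ∀ v ∈ G.neighborFinset x,
        (if v = x then (0:ℝ) else lazyWalk G α x v) = (1-α)/(G.degree x : ℝ) := by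
      intro v hv
      rw [SimpleGraph.mem_neighborFinset] at hv
      simp [lazyWalk, hv.ne', hv]
    rw [Finset.sum_congr rfl h2, Finset.sum_const, nsmul_eq_mul]
    norm_cast
  rw [step1]
  refine le_trans step2 ?_
  rw [step3]
  rcases Nat.eq_zero_or_pos (G.degree x) with h | h
  · simp [h]
    linarith [hα.2]
  · rw [mul_comm, div_mul_cancel₀ _ (by exact_mod_cast h.ne' : (G.degree x:ℝ) ≠ 0)]

lemma lazyWalk_adj_of_ne {α : ℝ} {x u : V} (h : u ≠ x) (h2 : lazyWalk G α x u ≠ 0) :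
    G.Adj x u := by
  by_contra hc
  exact h2 (by simp [lazyWalk, h, hc])

end Aux

/-- For distinct vertices `x, y` of a simple connected graph and any `α ∈ [0,1]`,
`κ_α(x,y) ≤ (1-α)·2/d(x,y)`. -/
theorem alphaRicci_upper_bound (G : SimpleGraph V) [G.LocallyFinite]
    (hconn : G.Connected) (x y : V) (hxy : x ≠ y)
    (α : ℝ) (hα : α ∈ Set.Icc (0:ℝ) 1) :
    alphaRicci G α x y ≤ (1 - α) * 2 / (G.dist x y : ℝ) := by
  classical
  obtain ⟨hα0, hα1⟩ := hα
  have hα' : α ∈ Set.Icc (0:ℝ) 1 := ⟨hα0, hα1⟩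
  have hdx : 0 < G.degree x := by
    rw [G.degree_pos_iff_exists_adj _]
    obtain ⟨p⟩ := hconn x y
    cases p with
    | nil => exact absurd rfl hxy
    | cons h _ => exact ⟨_, h⟩
  have hdy : 0 < G.degree y := by
    rw [G.degree_pos_iff_exists_adj _]
    obtain ⟨p⟩ := hconn y x
    cases p with
    | nil => exact absurd rfl hxy.symm
    | cons h _ => exact ⟨_, h⟩
  have hDnat : 0 < G.dist x y := hconn.pos_dist_of_ne hxy
  have hD : (0:ℝ) < (G.dist x y : ℝ) := by exact_mod_cast hDnat
  set mx := lazyWalk G α x with hmx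
  set my := lazyWalk G α y with hmy
  set S : Set ℝ := {w : ℝ | ∃ A : V → V → ℝ, IsCoupling mx my A ∧
    w = ∑ᶠ p : V × V, A p.1 p.2 * (G.dist p.1 p.2 : ℝ)} with hS
  have hfx : (Function.support mx).Finite :=
    Set.Finite.subset (Finset.finite_toSet _) (lazyWalk_support G α x)
  have hfy : (Function.support my).Finite :=
    Set.Finite.subset (Finset.finite_toSet _) (lazyWalk_support G α y)
  -- nonemptiness via product coupling
  have hne : S.Nonempty := by
    refine ⟨_, fun u v => mx u * my v, ⟨?_, ?_, ?_, ?_⟩, rfl⟩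
    · refine (hfx.prod hfy).subset ?_
      intro p hp
      rw [Function.mem_support] at hp
      exact ⟨left_ne_zero_of_mul hp, right_ne_zero_of_mul hp⟩
    · intro u v
      constructor
      · exact mul_nonneg (lazyWalk_nonneg G hα' x u) (lazyWalk_nonneg G hα' y v)
      · exact mul_le_one₀ (lazyWalk_le_one G hα' x u) (lazyWalk_nonneg G hα' y v)
          (lazyWalk_le_one G hα' y v)
    · intro u
      rw [← mul_finsum my (mx u), lazyWalk_finsum G y hdy, mul_one]
    · intro v
      rw [← finsum_mul mx (my v), lazyWalk_finsum G x hdx, one_mul]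
  -- lower bound
  have hlow : ∀ w ∈ S, (G.dist x y : ℝ) - 2*(1-α) ≤ w := by
    rintro w ⟨A, ⟨hfin, hA01, hrow, hcol⟩, rfl⟩
    set T := hfin.toFinset with hT
    set U := T.image Prod.fst with hU
    set Wf := T.image Prod.snd with hWf
    have hmemT : ∀ {u v : V}, A u v ≠ 0 → (u, v) ∈ T := by
      intro u v h
      exact hfin.mem_toFinset.2 h
    have hTsub : T ⊆ U ×ˢ Wf := by
      intro p hp
      rw [Finset.mem_product]
      exact ⟨Finset.mem_image_of_mem _ hp, Finset.mem_image_of_mem _ hp⟩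
    have hAnn : ∀ u v, 0 ≤ A u v := fun u v => (hA01 u v).1
    have hrowF : ∀ u, ∑ v ∈ Wf, A u v = mx u := by
      intro u
      rw [← hrow u]
      refine (finsum_eq_sum_of_support_subset _ ?_).symm
      intro v hv
      rw [Function.mem_support] at hv
      exact Finset.mem_coe.mpr (Finset.mem_image_of_mem _ (hmemT hv))
    have hcolF : ∀ v, ∑ u ∈ U, A u v = my v := by
      intro v
      rw [← hcol v]
      refine (finsum_eq_sum_of_support_subset _ ?_).symm
      intro u hu
      rw [Function.mem_support] at hu
      exact Finset.mem_coe.mpr (Finset.mem_image_of_mem _ (hmemT hu))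
    have hw : ∑ᶠ p : V × V, A p.1 p.2 * (G.dist p.1 p.2 : ℝ)
        = ∑ p ∈ U ×ˢ Wf, A p.1 p.2 * (G.dist p.1 p.2 : ℝ) := by
      apply finsum_eq_sum_of_support_subset
      intro p hp
      rw [Function.mem_support] at hp
      have h : A p.1 p.2 ≠ 0 := fun h => hp (by rw [h, zero_mul])
      exact Finset.mem_coe.mpr (hTsub (hmemT h))
    have hmass : ∑ p ∈ U ×ˢ Wf, A p.1 p.2 = 1 := by
      rw [Finset.sum_product]
      rw [Finset.sum_congr rfl (fun u _ => hrowF u)]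
      have hsub : Function.support mx ⊆ ↑U := by
        intro u hu
        rw [Function.mem_support] at hu
        have : ∃ v, A u v ≠ 0 := by
          by_contra h
          push_neg at h
          apply hu
          rw [← hrow u]
          exact finsum_eq_zero_of_forall_eq_zero h
        obtain ⟨v, hv⟩ := this
        exact Finset.mem_coe.mpr (Finset.mem_image_of_mem _ (hmemT hv))
      rw [← finsum_eq_sum_of_support_subset _ hsub]
      exact lazyWalk_finsum G x hdx
    have hS1 : ∑ p ∈ U ×ˢ Wf, A p.1 p.2 * (G.dist x p.1 : ℝ) ≤ 1 - α := by
      rw [Finset.sum_product]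
      have e1 : ∀ u ∈ U, ∑ v ∈ Wf, A u v * (G.dist x u : ℝ) = mx u * (G.dist x u : ℝ) := by
        intro u _
        rw [← Finset.sum_mul, hrowF]
      rw [Finset.sum_congr rfl e1]
      refine le_trans (Finset.sum_le_sum (fun u _ => ?_)) (sum_offdiag_le G hα' x U)
      by_cases h : u = x
      · simp [h, SimpleGraph.dist_self]
      · by_cases h2 : mx u = 0
        · simpa [h, h2] using lazyWalk_nonneg G hα' x u
        · have hadj : G.Adj x u := lazyWalk_adj_of_ne G h h2
          have hd1 : G.dist x u = 1 := SimpleGraph.dist_eq_one_iff_adj.2 hadj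
          simp [h, hd1]
          exact le_rfl
    have hS2 : ∑ p ∈ U ×ˢ Wf, A p.1 p.2 * (G.dist p.2 y : ℝ) ≤ 1 - α := by
      rw [Finset.sum_product, Finset.sum_comm]
      have e1 : ∀ v ∈ Wf, ∑ u ∈ U, A u v * (G.dist v y : ℝ) = my v * (G.dist v y : ℝ) := by
        intro v _
        rw [← Finset.sum_mul, hcolF]
      rw [Finset.sum_congr rfl e1]
      refine le_trans (Finset.sum_le_sum (fun v _ => ?_)) (sum_offdiag_le G hα' y Wf)
      by_cases h : v = y
      · simp [h, SimpleGraph.dist_self]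
      · by_cases h2 : my v = 0
        · simpa [h, h2] using lazyWalk_nonneg G hα' y v
        · have hadj : G.Adj y v := lazyWalk_adj_of_ne G h h2
          have hd1 : G.dist v y = 1 := by
            rw [SimpleGraph.dist_comm]
            exact SimpleGraph.dist_eq_one_iff_adj.2 hadj
          simp [h, hd1]
          exact le_rfl
    have key : (G.dist x y : ℝ) * 1 ≤ (∑ p ∈ U ×ˢ Wf, A p.1 p.2 * (G.dist x p.1 : ℝ))
        + (∑ p ∈ U ×ˢ Wf, A p.1 p.2 * (G.dist p.1 p.2 : ℝ))
        + (∑ p ∈ U ×ˢ Wf, A p.1 p.2 * (G.dist p.2 y : ℝ)) := by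
      rw [← hmass, Finset.mul_sum, ← Finset.sum_add_distrib, ← Finset.sum_add_distrib]
      apply Finset.sum_le_sum
      intro p _
      have h0 : G.dist x y ≤ G.dist x p.1 + G.dist p.1 p.2 + G.dist p.2 y := by
        have h1 := hconn.dist_triangle (u := x) (v := p.1) (w := y)
        have h2 := hconn.dist_triangle (u := p.1) (v := p.2) (w := y)
        omega
      have htri : (G.dist x y : ℝ) ≤ (G.dist x p.1 : ℝ) + (G.dist p.1 p.2 : ℝ)
          + (G.dist p.2 y : ℝ) := by exact_mod_cast h0
      have := mul_le_mul_of_nonneg_left htri (hAnn p.1 p.2)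
      nlinarith [this]
    rw [hw]
    linarith [key, hS1, hS2]
  have hW : (G.dist x y : ℝ) - 2*(1-α)
      ≤ transportDist G mx my := le_csInf hne hlow
  have halg : (((G.dist x y : ℝ) - 2*(1-α)) / (G.dist x y : ℝ))
      ≤ transportDist G mx my / (G.dist x y : ℝ) := by gcongr
  rw [sub_div, div_self hD.ne'] at halg
  have hfin : (1-α)*2/(G.dist x y : ℝ) = 2*(1-α)/(G.dist x y : ℝ) := by ring
  show 1 - transportDist G mx my / (G.dist x y : ℝ) ≤ _
  rw [hfin]
  linarith [halg]
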